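/- If φ is a traveling wave with speed ℓ, then 0 < φ(x) < 1 and φ'(x) > 0 for all x ∈ ℝ. -/

import Mathlib

open MeasureTheory Filter Topology

/-- Convolution `(q * u)(x) = ∫ q(y) u(x - y) dy`. -/
noncomputable def conv (q u : ℝ → ℝ) (x : ℝ) : ℝ := ∫ y : ℝ, q y * u (x - y)

/-- The shifted kernel `q_ℓ(x) = q(x + ℓ)`. -/
def qshift (q : ℝ → ℝ) (ℓ : ℝ) (x : ℝ) : ℝ := q (x + ℓ)

/-- The bistable setting: a `C¹` compactly supported probability density `q`, and a
polynomial `P` (the recursion polynomial, i.e. `g` on `[0,1]`) with `P(0) = 0`, `P(1) = 1`,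
`0 < P < 1` and `P' > 0` on `(0,1)`; the nonlinearity `f(x) = P(x) - x` has a unique zero
`θ ∈ (0,1)` and `f'(0) < 0`, `f'(1) < 0` (equivalently `P'(0) < 1`, `P'(1) < 1`). -/
structure BistableSetting where
  q : ℝ → ℝ
  P : Polynomial ℝ
  θ : ℝ
  hq_diff : ContDiff ℝ 1 q
  hq_supp : HasCompactSupport q
  hq_nonneg : ∀ x, 0 ≤ q x
  hq_int : ∫ x : ℝ, q x = 1
  hP0 : P.eval 0 = 0
  hP1 : P.eval 1 = 1
  hP_range : ∀ x ∈ Set.Ioo (0 : ℝ) 1, 0 < P.eval x ∧ P.eval x < 1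
  hP_mono : ∀ x ∈ Set.Ioo (0 : ℝ) 1, 0 < (Polynomial.derivative P).eval x
  hθ_mem : θ ∈ Set.Ioo (0 : ℝ) 1
  hθ_zero : P.eval θ = θ
  hθ_unique : ∀ x ∈ Set.Ioo (0 : ℝ) 1, P.eval x = x → x = θ
  hf'0 : (Polynomial.derivative P).eval 0 < 1
  hf'1 : (Polynomial.derivative P).eval 1 < 1

/-- The nonlinearity `g`, equal to the polynomial `P` on `[0,1]` and extended linearly:
`g(x) = x + f'(0)·x` for `x < 0` and `g(x) = x + f'(1)(x-1)` for `x > 1`. -/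
noncomputable def BistableSetting.g (S : BistableSetting) (x : ℝ) : ℝ :=
  if x < 0 then (Polynomial.derivative S.P).eval 0 * x
  else if x ≤ 1 then S.P.eval x
  else 1 + (Polynomial.derivative S.P).eval 1 * (x - 1)

/-- A traveling wave with speed `ℓ`: a nondecreasing `C¹` function `φ` with
`φ = g(q_ℓ * φ)`, `φ(-∞) = 0` and `φ(+∞) = 1`. -/
structure IsTravelingWave (S : BistableSetting) (ℓ : ℝ) (φ : ℝ → ℝ) : Prop where
  mono : Monotone φ
  smooth : ContDiff ℝ 1 φ
  wave_eq : ∀ x, φ x = S.g (conv (qshift S.q ℓ) φ x)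
  limit_bot : Tendsto φ atBot (𝓝 0)
  limit_top : Tendsto φ atTop (𝓝 1)



/-- Propagation lemma: if a set is stable under adding any element of a positive
interval, it contains a half-line to the right of any of its points. -/
lemma halfline_aux (A : Set ℝ) (c d : ℝ) (hc : 0 < c) (hcd : c < d)
    (step : ∀ x ∈ A, ∀ y ∈ Set.Ioo c d, x + y ∈ A) {x₀ : ℝ} (hx₀ : x₀ ∈ A) :
    ∃ X : ℝ, ∀ z, X ≤ z → z ∈ A := by
  have hd0 : 0 < d := hc.trans hcd
  have key : ∀ n : ℕ, ∀ w, ((n : ℝ) + 1) * c < w → w < ((n : ℝ) + 1) * d → x₀ + w ∈ A := by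
    intro n
    induction n with
    | zero =>
      intro w h1 h2
      norm_num at h1 h2
      exact step x₀ hx₀ w ⟨by linarith, by linarith⟩
    | succ n ih =>
      intro w h1 h2
      push_cast at h1 h2
      set m : ℝ := (n : ℝ) + 2 with hm
      have hm0 : (0 : ℝ) < m := by positivity
      have hm1 : (1 : ℝ) < m := by have := Nat.cast_nonneg (α := ℝ) n; simp only [hm]; linarith
      set v := w / m with hv
      have hwv : w = m * v := by rw [mul_comm]; exact ((eq_div_iff hm0.ne').1 hv).symm
      have hy1 : c < v := by rw [hv, lt_div_iff₀ hm0]; nlinarith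
      have hy2 : v < d := by rw [hv, div_lt_iff₀ hm0]; nlinarith
      have hA' : x₀ + (w - v) ∈ A := by
        apply ih
        · nlinarith
        · nlinarith
      have := step _ hA' v ⟨hy1, hy2⟩
      have hrw : x₀ + (w - v) + v = x₀ + w := by ring
      rwa [hrw] at this
  have hdc : 0 < d - c := by linarith
  refine ⟨x₀ + c * d / (d - c) + d + 1, fun z hz => ?_⟩
  set w := z - x₀ with hw
  have hw1 : c * d / (d - c) + d + 1 ≤ w := by simp only [hw]; linarith
  have hcd0 : c * d / (d - c) * (d - c) = c * d := div_mul_cancel₀ _ (ne_of_gt hdc)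
  have hkey : c * d < w * (d - c) := by nlinarith [mul_le_mul_of_nonneg_right hw1 hdc.le]
  have hw0 : 0 < w := by nlinarith [div_nonneg (by positivity : (0:ℝ) ≤ c * d) hdc.le]
  set n := ⌊w / d⌋₊ with hn
  have hf1 : (n : ℝ) ≤ w / d := Nat.floor_le (by positivity)
  have hf2 : w / d < (n : ℝ) + 1 := Nat.lt_floor_add_one _
  have h2 : w < ((n : ℝ) + 1) * d := by
    rw [div_lt_iff₀ hd0] at hf2; linarith
  have h1 : ((n : ℝ) + 1) * c < w := by
    have hfd : (n : ℝ) * d ≤ w := by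
      rw [← le_div_iff₀ hd0]; exact hf1
    nlinarith
  have := key n w h1 h2
  have hrw : x₀ + w = z := by simp [hw]
  rwa [hrw] at this

lemma const_on_halfline_top {φ : ℝ → ℝ} (hd : Differentiable ℝ φ) {X : ℝ}
    (hz : ∀ z, X ≤ z → deriv φ z = 0) : ∀ z, X ≤ z → φ z = φ X := by
  intro z hz'
  rcases eq_or_lt_of_le hz' with heq | hlt
  · rw [← heq]
  · obtain ⟨c, hc, hslope⟩ := exists_hasDerivAt_eq_slope φ (deriv φ) hlt
      hd.continuous.continuousOn (fun t _ => (hd t).hasDerivAt)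
    rw [hz c hc.1.le] at hslope
    rcases div_eq_zero_iff.1 hslope.symm with h | h
    · linarith
    · exfalso; linarith [sub_ne_zero.2 (ne_of_gt hlt) , h]

lemma const_on_halfline_bot {φ : ℝ → ℝ} (hd : Differentiable ℝ φ) {X : ℝ}
    (hz : ∀ z, z ≤ X → deriv φ z = 0) : ∀ z, z ≤ X → φ z = φ X := by
  intro z hz'
  rcases eq_or_lt_of_le hz' with heq | hlt
  · rw [heq]
  · obtain ⟨c, hc, hslope⟩ := exists_hasDerivAt_eq_slope φ (deriv φ) hlt
      hd.continuous.continuousOn (fun t _ => (hd t).hasDerivAt)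
    rw [hz c hc.2.le] at hslope
    rcases div_eq_zero_iff.1 hslope.symm with h | h
    · linarith
    · exfalso; linarith [sub_ne_zero.2 (ne_of_gt hlt), h]


lemma P_lt_self (S : BistableSetting) : ∀ t ∈ Set.Ioo 0 S.θ, S.P.eval t < t := by
  have hθ := S.hθ_mem
  obtain ⟨t₀, ht₀, ht₀neg⟩ : ∃ t₀ ∈ Set.Ioo 0 S.θ, S.P.eval t₀ - t₀ < 0 := by
    have hdA : HasDerivAt (fun t => S.P.eval t - t) ((Polynomial.derivative S.P).eval 0 - 1) 0 :=
      (S.P.hasDerivAt 0).sub (hasDerivAt_id 0)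
    have hs := hasDerivAt_iff_tendsto_slope.1 hdA
    have hs' : Tendsto (slope (fun t => S.P.eval t - t) 0) (𝓝[>] 0)
        (𝓝 ((Polynomial.derivative S.P).eval 0 - 1)) :=
      hs.mono_left (nhdsWithin_mono 0 fun y hy => Set.mem_compl_singleton_iff.mpr (ne_of_gt hy))
    have hev : ∀ᶠ t in 𝓝[>] (0 : ℝ), slope (fun t => S.P.eval t - t) 0 t < 0 :=
      hs'.eventually_lt_const (by linarith [S.hf'0])
    have hev2 : ∀ᶠ t in 𝓝[>] (0 : ℝ), t ∈ Set.Ioo (0 : ℝ) S.θ :=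
      eventually_of_mem (Ioo_mem_nhdsGT_of_mem ⟨le_refl 0, hθ.1⟩) fun t ht => ht
    obtain ⟨t₀, hslope, ht₀⟩ := (hev.and hev2).exists
    refine ⟨t₀, ht₀, ?_⟩
    have hsl : slope (fun t => S.P.eval t - t) 0 t₀ = (S.P.eval t₀ - t₀) / t₀ := by
      simp [slope_def_field, S.hP0]
    rw [hsl] at hslope
    rcases div_neg_iff.1 hslope with ⟨_, hneg⟩ | ⟨hnum, _⟩
    · linarith [ht₀.1]
    · linarith
  intro t ht
  by_contra hge; push_neg at hge
  have hmemθ : t ∈ Set.Ioo (0 : ℝ) 1 := ⟨ht.1, ht.2.trans hθ.2⟩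
  rcases eq_or_lt_of_le hge with heq | hlt
  · exact absurd (S.hθ_unique t hmemθ heq.symm) (ne_of_lt ht.2)
  · set f : ℝ → ℝ := fun s => S.P.eval s - s with hfdef
    have hfc : Continuous f := (S.P.continuous).sub continuous_id
    have h₁ : f t₀ < 0 := ht₀neg
    have h₂ : 0 < f t := by simp only [hfdef]; linarith
    have hne : t₀ ≠ t := fun hh => by rw [hh] at h₁; linarith
    rcases lt_or_gt_of_ne hne with hlt2 | hlt2
    · obtain ⟨z, hz, hz0⟩ := intermediate_value_Ioo hlt2.le hfc.continuousOn
        (Set.mem_Ioo.2 ⟨h₁, h₂⟩)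
      have hzθ : z < S.θ := hz.2.trans ht.2
      have hzm : z ∈ Set.Ioo (0 : ℝ) 1 := ⟨ht₀.1.trans hz.1, hzθ.trans hθ.2⟩
      have : z = S.θ := S.hθ_unique z hzm (by simp only [hfdef] at hz0; linarith)
      linarith
    · obtain ⟨z, hz, hz0⟩ := intermediate_value_Ioo' hlt2.le hfc.continuousOn
        (Set.mem_Ioo.2 ⟨h₁, h₂⟩)
      have hzθ : z < S.θ := hz.2.trans ht₀.2
      have hzm : z ∈ Set.Ioo (0 : ℝ) 1 := ⟨ht.1.trans hz.1, hzθ.trans hθ.2⟩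
      have : z = S.θ := S.hθ_unique z hzm (by simp only [hfdef] at hz0; linarith)
      linarith

lemma self_lt_P (S : BistableSetting) : ∀ t ∈ Set.Ioo S.θ 1, t < S.P.eval t := by
  have hθ := S.hθ_mem
  obtain ⟨t₀, ht₀, ht₀pos⟩ : ∃ t₀ ∈ Set.Ioo S.θ 1, 0 < S.P.eval t₀ - t₀ := by
    have hdA : HasDerivAt (fun t => S.P.eval t - t) ((Polynomial.derivative S.P).eval 1 - 1) 1 :=
      (S.P.hasDerivAt 1).sub (hasDerivAt_id 1)
    have hs := hasDerivAt_iff_tendsto_slope.1 hdA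
    have hs' : Tendsto (slope (fun t => S.P.eval t - t) 1) (𝓝[<] 1)
        (𝓝 ((Polynomial.derivative S.P).eval 1 - 1)) :=
      hs.mono_left (nhdsWithin_mono 1 fun y hy => Set.mem_compl_singleton_iff.mpr (ne_of_lt hy))
    have hev : ∀ᶠ t in 𝓝[<] (1 : ℝ), slope (fun t => S.P.eval t - t) 1 t < 0 :=
      hs'.eventually_lt_const (by linarith [S.hf'1])
    have hev2 : ∀ᶠ t in 𝓝[<] (1 : ℝ), t ∈ Set.Ioo S.θ (1 : ℝ) :=
      eventually_of_mem (Ioo_mem_nhdsLT_of_mem ⟨hθ.2, le_refl 1⟩) fun t ht => ht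
    obtain ⟨t₀, hslope, ht₀⟩ := (hev.and hev2).exists
    refine ⟨t₀, ht₀, ?_⟩
    have hsl : slope (fun t => S.P.eval t - t) 1 t₀ = (S.P.eval t₀ - t₀) / (t₀ - 1) := by
      simp [slope_def_field, S.hP1]
    rw [hsl] at hslope
    rcases div_neg_iff.1 hslope with ⟨hnum, _⟩ | ⟨_, hpos⟩
    · linarith
    · linarith [ht₀.2]
  intro t ht
  by_contra hge; push_neg at hge
  have hmemθ : t ∈ Set.Ioo (0 : ℝ) 1 := ⟨hθ.1.trans ht.1, ht.2⟩
  rcases eq_or_lt_of_le hge with heq | hlt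
  · exact absurd (S.hθ_unique t hmemθ heq) (ne_of_gt ht.1)
  · set f : ℝ → ℝ := fun s => S.P.eval s - s with hfdef
    have hfc : Continuous f := (S.P.continuous).sub continuous_id
    have h₁ : 0 < f t₀ := ht₀pos
    have h₂ : f t < 0 := by simp only [hfdef]; linarith
    have hne : t₀ ≠ t := fun hh => by rw [hh] at h₁; linarith
    rcases lt_or_gt_of_ne hne with hlt2 | hlt2
    · obtain ⟨z, hz, hz0⟩ := intermediate_value_Ioo' hlt2.le hfc.continuousOn
        (Set.mem_Ioo.2 ⟨h₂, h₁⟩)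
      have hzθ : S.θ < z := ht₀.1.trans hz.1
      have hzm : z ∈ Set.Ioo (0 : ℝ) 1 := ⟨hθ.1.trans hzθ, hz.2.trans ht.2⟩
      have : z = S.θ := S.hθ_unique z hzm (by simp only [hfdef] at hz0; linarith)
      linarith
    · obtain ⟨z, hz, hz0⟩ := intermediate_value_Ioo hlt2.le hfc.continuousOn
        (Set.mem_Ioo.2 ⟨h₂, h₁⟩)
      have hzθ : S.θ < z := ht.1.trans hz.1
      have hzm : z ∈ Set.Ioo (0 : ℝ) 1 := ⟨hθ.1.trans hzθ, hz.2.trans ht₀.2⟩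
      have : z = S.θ := S.hθ_unique z hzm (by simp only [hfdef] at hz0; linarith)
      linarith

/-- A traveling wave profile takes values strictly in `(0,1)` and is strictly increasing,
with an everywhere positive derivative. -/
theorem traveling_wave_strictly_increasing (S : BistableSetting) (ℓ : ℝ) (φ : ℝ → ℝ)
    (h : IsTravelingWave S ℓ φ) :
    ∀ x : ℝ, (0 < φ x ∧ φ x < 1) ∧ 0 < deriv φ x := by
  classical
  set k : ℝ → ℝ := qshift S.q ℓ with hkdef
  have hk_cont : Continuous k := S.hq_diff.continuous.comp (continuous_id.add continuous_const)
  have hk_supp : HasCompactSupport k := S.hq_supp.comp_homeomorph (Homeomorph.addRight ℓ)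
  have hk_nonneg : ∀ y, 0 ≤ k y := fun y => S.hq_nonneg _
  have hk_int_one : (∫ y : ℝ, k y) = 1 := by
    have := MeasureTheory.integral_add_right_eq_self (μ := volume) S.q ℓ
    simpa [hkdef, qshift, S.hq_int] using this
  have hk_integrable : Integrable k := hk_cont.integrable_of_hasCompactSupport hk_supp
  have hφ_cont : Continuous φ := h.smooth.continuous
  have hφ_diff : Differentiable ℝ φ := h.smooth.differentiable one_ne_zero
  have hφ0 : ∀ x, 0 ≤ φ x := by
    intro x
    refine le_of_tendsto h.limit_bot ?_
    filter_upwards [eventually_le_atBot x] with y hy using h.mono hy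
  have hφ1 : ∀ x, φ x ≤ 1 := by
    intro x
    refine ge_of_tendsto h.limit_top ?_
    filter_upwards [eventually_ge_atTop x] with y hy using h.mono hy
  set u : ℝ → ℝ := conv k φ with hudef
  have hint : ∀ x g', Continuous g' → Integrable (fun y => k y * g' (x - y)) := by
    intro x g' hg'
    apply Continuous.integrable_of_hasCompactSupport
    · exact hk_cont.mul (hg'.comp (continuous_const.sub continuous_id))
    · exact hk_supp.mul_right
  have hu_eq : ∀ x, u x = ∫ y : ℝ, k y * φ (x - y) := fun x => rfl
  have hu_nonneg : ∀ x, 0 ≤ u x := fun x =>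
    integral_nonneg fun y => mul_nonneg (hk_nonneg y) (hφ0 _)
  have hu_le_one : ∀ x, u x ≤ 1 := by
    intro x
    have : u x ≤ ∫ y : ℝ, k y := by
      refine integral_mono (hint x φ hφ_cont) hk_integrable fun y => ?_
      have h1 := hφ1 (x - y)
      nlinarith [hk_nonneg y]
    simpa [hk_int_one] using this
  have hg_eq : ∀ t : ℝ, 0 ≤ t → t ≤ 1 → S.g t = S.P.eval t := by
    intro t h0 h1
    unfold BistableSetting.g
    rw [if_neg (not_lt.2 h0), if_pos h1]
  have hφP : ∀ x, φ x = S.P.eval (u x) := by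
    intro x
    rw [h.wave_eq x]
    exact hg_eq _ (hu_nonneg x) (hu_le_one x)
  have hzero : ∀ f : ℝ → ℝ, Continuous f → (∀ y, 0 ≤ f y) → Integrable f →
      (∫ y : ℝ, f y) = 0 → ∀ y, f y = 0 := by
    intro f hc hn hi hz
    have hae : f =ᵐ[volume] 0 := (integral_eq_zero_iff_of_nonneg hn hi).1 hz
    have : f = 0 := (hc.ae_eq_iff_eq volume continuous_const).1 hae
    intro y; exact congrFun this y
  have hval0 : ∀ x, φ x = 0 → u x = 0 := by
    intro x hx
    rcases (hu_nonneg x).lt_or_eq with h0 | h0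
    · exfalso
      rcases (hu_le_one x).lt_or_eq with h1 | h1
      · have := (S.hP_range (u x) ⟨h0, h1⟩).1
        rw [hφP x] at hx; linarith
      · rw [hφP x, h1, S.hP1] at hx; norm_num at hx
    · exact h0.symm
  have hval1 : ∀ x, φ x = 1 → u x = 1 := by
    intro x hx
    rcases (hu_le_one x).lt_or_eq with h1 | h1
    · exfalso
      rcases (hu_nonneg x).lt_or_eq with h0 | h0
      · have := (S.hP_range (u x) ⟨h0, h1⟩).2
        rw [hφP x] at hx; linarith
      · rw [hφP x, ← h0, S.hP0] at hx; norm_num at hx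
    · exact h1
  -- strict positivity
  have hpos : ∀ x, 0 < φ x := by
    by_contra hcon
    push_neg at hcon
    obtain ⟨x₀, hx₀⟩ := hcon
    have hx₀0 : φ x₀ = 0 := le_antisymm hx₀ (hφ0 x₀)
    set Z := {x : ℝ | φ x = 0} with hZdef
    have hZne : Z.Nonempty := ⟨x₀, hx₀0⟩
    have hZcl : IsClosed Z := isClosed_eq hφ_cont continuous_const
    obtain ⟨x₁, hx₁⟩ : ∃ x₁ : ℝ, (1 : ℝ) / 2 < φ x₁ :=
      (h.limit_top.eventually (eventually_gt_nhds (by norm_num : (1 : ℝ) / 2 < 1))).exists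
    have hZbdd : BddAbove Z := by
      refine ⟨x₁, fun z hz => ?_⟩
      by_contra hlt
      push_neg at hlt
      have := h.mono hlt.le
      rw [hz] at this
      linarith
    set a := sSup Z with hadef
    have haZ : a ∈ Z := hZcl.csSup_mem hZne hZbdd
    have hua : u a = 0 := hval0 a haZ
    have hptwise : ∀ y, k y * φ (a - y) = 0 := by
      refine hzero _ (hk_cont.mul (hφ_cont.comp (continuous_const.sub continuous_id)))
        (fun y => mul_nonneg (hk_nonneg y) (hφ0 _)) (hint a φ hφ_cont) ?_
      rw [← hu_eq a, hua]
    by_cases hcase : ∃ y, y < 0 ∧ k y ≠ 0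
    · obtain ⟨y, hy, hky⟩ := hcase
      have hφay : φ (a - y) = 0 := by
        rcases mul_eq_zero.1 (hptwise y) with hh | hh
        · exact absurd hh hky
        · exact hh
      have : a - y ≤ a := le_csSup hZbdd hφay
      linarith
    · push_neg at hcase
      have hule : ∀ x, u x ≤ φ x := by
        intro x
        have h1 : u x ≤ ∫ y : ℝ, k y * φ x := by
          refine integral_mono (hint x φ hφ_cont) (hk_integrable.mul_const _) fun y => ?_
          by_cases hy : y < 0
          · simp [hcase y hy]
          · push_neg at hy
            exact mul_le_mul_of_nonneg_left (h.mono (by linarith : x - y ≤ x)) (hk_nonneg y)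
        rwa [integral_mul_const, hk_int_one, one_mul] at h1
      have hθm := S.hθ_mem
      have hmem : {x : ℝ | φ x < S.θ} ∈ 𝓝 a := by
        have : Set.Iio S.θ ∈ 𝓝 (φ a) := Iio_mem_nhds (by rw [haZ]; exact hθm.1)
        exact hφ_cont.continuousAt this
      obtain ⟨δ, hδ, hball⟩ := Metric.mem_nhds_iff.1 hmem
      set x := a + δ / 2 with hxdef
      have hxθ : φ x < S.θ := by
        apply hball
        simp only [Metric.mem_ball, hxdef, Real.dist_eq]
        rw [show a + δ / 2 - a = δ / 2 by ring, abs_of_pos (by linarith)]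
        linarith
      rcases (hu_nonneg x).lt_or_eq with h0 | h0
      · have huθ : u x < S.θ := lt_of_le_of_lt (hule x) hxθ
        have hPu := P_lt_self S (u x) ⟨h0, huθ⟩
        have := hule x
        rw [hφP x] at this
        linarith
      · have hφx : φ x = 0 := by rw [hφP x, ← h0, S.hP0]
        have : x ≤ a := le_csSup hZbdd hφx
        rw [hxdef] at this
        linarith
  -- strictly below 1
  have hlt1 : ∀ x, φ x < 1 := by
    by_contra hcon
    push_neg at hcon
    obtain ⟨x₀, hx₀⟩ := hcon
    have hx₀1 : φ x₀ = 1 := le_antisymm (hφ1 x₀) hx₀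
    set W := {x : ℝ | φ x = 1} with hWdef
    have hWne : W.Nonempty := ⟨x₀, hx₀1⟩
    have hWcl : IsClosed W := isClosed_eq hφ_cont continuous_const
    obtain ⟨x₁, hx₁⟩ : ∃ x₁ : ℝ, φ x₁ < (1 : ℝ) / 2 :=
      (h.limit_bot.eventually (eventually_lt_nhds (by norm_num : (0 : ℝ) < 1 / 2))).exists
    have hWbdd : BddBelow W := by
      refine ⟨x₁, fun z hz => ?_⟩
      by_contra hlt
      push_neg at hlt
      have := h.mono hlt.le
      rw [hz] at this
      linarith
    set b := sInf W with hbdef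
    have hbW : b ∈ W := hWcl.csInf_mem hWne hWbdd
    have hub : u b = 1 := hval1 b hbW
    have hptwise : ∀ y, k y * (1 - φ (b - y)) = 0 := by
      refine hzero _ (hk_cont.mul (continuous_const.sub
          (hφ_cont.comp (continuous_const.sub continuous_id))))
        (fun y => mul_nonneg (hk_nonneg y) (by linarith [hφ1 (b - y)])) ?_ ?_
      · have := (hk_integrable.sub (hint b φ hφ_cont))
        refine this.congr ?_
        filter_upwards with y
        simp only [Pi.sub_apply]
        ring
      · have hsub : (∫ y : ℝ, k y * (1 - φ (b - y))) =
            (∫ y : ℝ, k y) - ∫ y : ℝ, k y * φ (b - y) := by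
          rw [← integral_sub hk_integrable (hint b φ hφ_cont)]
          congr 1
          funext y
          ring
        rw [hsub, hk_int_one, ← hu_eq b, hub]
        ring
    by_cases hcase : ∃ y, 0 < y ∧ k y ≠ 0
    · obtain ⟨y, hy, hky⟩ := hcase
      have hφby : φ (b - y) = 1 := by
        rcases mul_eq_zero.1 (hptwise y) with hh | hh
        · exact absurd hh hky
        · linarith [sub_eq_zero.1 hh]
      have : b ≤ b - y := csInf_le hWbdd hφby
      linarith
    · push_neg at hcase
      have huge : ∀ x, φ x ≤ u x := by
        intro x
        have h1 : (∫ y : ℝ, k y * φ x) ≤ u x := by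
          refine integral_mono (hk_integrable.mul_const _) (hint x φ hφ_cont) fun y => ?_
          by_cases hy : 0 < y
          · simp [hcase y hy]
          · push_neg at hy
            exact mul_le_mul_of_nonneg_left (h.mono (by linarith : x ≤ x - y)) (hk_nonneg y)
        rwa [integral_mul_const, hk_int_one, one_mul] at h1
      have hθm := S.hθ_mem
      have hmem : {x : ℝ | S.θ < φ x} ∈ 𝓝 b := by
        have : Set.Ioi S.θ ∈ 𝓝 (φ b) := Ioi_mem_nhds (by rw [hbW]; exact hθm.2)
        exact hφ_cont.continuousAt this
      obtain ⟨δ, hδ, hball⟩ := Metric.mem_nhds_iff.1 hmem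
      set x := b - δ / 2 with hxdef
      have hxθ : S.θ < φ x := by
        apply hball
        simp only [Metric.mem_ball, hxdef, Real.dist_eq]
        rw [show b - δ / 2 - b = -(δ / 2) by ring, abs_neg, abs_of_pos (by linarith)]
        linarith
      have hφxlt : φ x < 1 := by
        rcases (hφ1 x).lt_or_eq with hh | hh
        · exact hh
        · exfalso
          have : b ≤ x := csInf_le hWbdd hh
          rw [hxdef] at this
          linarith
      rcases (hu_le_one x).lt_or_eq with h1 | h1
      · have huθ : S.θ < u x := lt_of_lt_of_le hxθ (huge x)
        have hPu := self_lt_P S (u x) ⟨huθ, h1⟩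
        have := huge x
        rw [hφP x] at this
        linarith
      · have : φ x = 1 := by rw [hφP x, h1, S.hP1]
        linarith
  -- derivative facts
  have hderiv_cont : Continuous (deriv φ) := h.smooth.continuous_deriv le_rfl
  have hderiv_nonneg : ∀ x, 0 ≤ deriv φ x := by
    intro x
    have hs := hasDerivAt_iff_tendsto_slope.1 (hφ_diff x).hasDerivAt
    have hs' : Tendsto (slope φ x) (𝓝[>] x) (𝓝 (deriv φ x)) :=
      hs.mono_left (nhdsWithin_mono x fun y hy => Set.mem_compl_singleton_iff.mpr (ne_of_gt hy))
    refine ge_of_tendsto hs' ?_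
    filter_upwards [self_mem_nhdsWithin] with y hy
    rw [slope_def_field]
    exact div_nonneg (by linarith [h.mono (le_of_lt hy)]) (by linarith [Set.mem_Ioi.1 hy])
  have hu_pos : ∀ x, 0 < u x := by
    intro x
    rcases (hu_nonneg x).lt_or_eq with hh | hh
    · exact hh
    · exfalso
      have : φ x = 0 := by rw [hφP x, ← hh, S.hP0]
      exact absurd this (hpos x).ne'
  have hu_lt1 : ∀ x, u x < 1 := by
    intro x
    rcases (hu_le_one x).lt_or_eq with hh | hh
    · exact hh
    · exfalso
      have : φ x = 1 := by rw [hφP x, hh, S.hP1]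
      exact absurd this (hlt1 x).ne
  -- derivative of u
  have hu_deriv : ∀ x₀ : ℝ, HasDerivAt u (∫ y : ℝ, k y * deriv φ (x₀ - y)) x₀ := by
    intro x₀
    obtain ⟨M, hM⟩ : ∃ M : ℝ, tsupport k ⊆ Set.Icc (-M) M := by
      obtain ⟨M, hM⟩ := hk_supp.isBounded.subset_closedBall 0
      refine ⟨M, ?_⟩
      intro y hy
      have := hM hy
      rw [Real.closedBall_eq_Icc] at this
      simpa using this
    obtain ⟨C, hC⟩ := isCompact_Icc.exists_bound_of_continuousOn
      (s := Set.Icc (x₀ - 1 - M) (x₀ + 1 + M)) hderiv_cont.continuousOn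
    have key := hasDerivAt_integral_of_dominated_loc_of_deriv_le
      (F := fun x y => k y * φ (x - y)) (F' := fun x y => k y * deriv φ (x - y))
      (x₀ := x₀) (bound := fun y => k y * C) (Metric.ball_mem_nhds x₀ one_pos)
      (Eventually.of_forall fun x =>
        ((hk_cont.mul (hφ_cont.comp (continuous_const.sub continuous_id))).aestronglyMeasurable))
      (hint x₀ φ hφ_cont)
      ((hk_cont.mul (hderiv_cont.comp (continuous_const.sub continuous_id))).aestronglyMeasurable)
      (MeasureTheory.ae_of_all _ ?_) (hk_integrable.mul_const C)
      (MeasureTheory.ae_of_all _ ?_)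
    · exact key.2
    · intro y x hx
      by_cases hy : y ∈ tsupport k
      · have hyM := hM hy
        have hxball : |x - x₀| < 1 := by
          have := Metric.mem_ball.1 hx
          rwa [Real.dist_eq] at this
        have habs := abs_lt.1 hxball
        have hmem : x - y ∈ Set.Icc (x₀ - 1 - M) (x₀ + 1 + M) := by
          constructor
          · have := hyM.2; linarith [habs.1]
          · have := hyM.1; linarith [habs.2]
        have hCb := hC (x - y) hmem
        calc ‖k y * deriv φ (x - y)‖ = k y * ‖deriv φ (x - y)‖ := by
              rw [norm_mul, Real.norm_of_nonneg (hk_nonneg y)]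
          _ ≤ k y * C := mul_le_mul_of_nonneg_left hCb (hk_nonneg y)
      · have : k y = 0 := image_eq_zero_of_notMem_tsupport hy
        simp [this]
    · intro y x hx
      have h1 : HasDerivAt (fun x : ℝ => φ (x - y)) (deriv φ (x - y)) x := by
        have := ((hφ_diff (x - y)).hasDerivAt.comp x ((hasDerivAt_id x).sub_const y))
        rw [mul_one] at this; exact this
      simpa using h1.const_mul (k y)
  have hchain : ∀ x, deriv φ x =
      (Polynomial.derivative S.P).eval (u x) * ∫ y : ℝ, k y * deriv φ (x - y) := by
    intro x
    have h1 : HasDerivAt (fun z => S.P.eval (u z))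
        ((Polynomial.derivative S.P).eval (u x) * ∫ y : ℝ, k y * deriv φ (x - y)) x :=
      (S.P.hasDerivAt (u x)).comp x (hu_deriv x)
    have h2 : φ = fun z => S.P.eval (u z) := funext hφP
    have h3 := h1.deriv
    rwa [← h2] at h3
  -- the zero set of the derivative and its propagation
  set A := {x : ℝ | deriv φ x = 0} with hAdef
  have hstep : ∀ x ∈ A, ∀ y : ℝ, k y ≠ 0 → x - y ∈ A := by
    intro x hx y hky
    have hP' : 0 < (Polynomial.derivative S.P).eval (u x) := S.hP_mono _ ⟨hu_pos x, hu_lt1 x⟩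
    have hint0 : (∫ y : ℝ, k y * deriv φ (x - y)) = 0 := by
      have hcx := hchain x
      have hx' : deriv φ x = 0 := hx
      rw [hx'] at hcx
      rcases mul_eq_zero.1 hcx.symm with hh | hh
      · exact absurd hh (ne_of_gt hP')
      · exact hh
    have hpt := hzero (fun y => k y * deriv φ (x - y))
      (hk_cont.mul (hderiv_cont.comp (continuous_const.sub continuous_id)))
      (fun y => mul_nonneg (hk_nonneg y) (hderiv_nonneg _))
      (hint x (deriv φ) hderiv_cont) hint0
    rcases mul_eq_zero.1 (hpt y) with hh | hh
    · exact absurd hh hky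
    · exact hh
  -- a point where k is positive, and an interval around it
  obtain ⟨y₀, hy₀⟩ : ∃ y₀ : ℝ, 0 < k y₀ := by
    by_contra hno
    push_neg at hno
    have hkz : ∀ y, k y = 0 := fun y => le_antisymm (hno y) (hk_nonneg y)
    have : (∫ y : ℝ, k y) = 0 := by simp [hkz]
    rw [hk_int_one] at this
    norm_num at this
  obtain ⟨δ, hδ, hball⟩ : ∃ δ > 0, ∀ y ∈ Metric.ball y₀ δ, 0 < k y := by
    have hmem : {y : ℝ | 0 < k y} ∈ 𝓝 y₀ := (isOpen_lt continuous_const hk_cont).mem_nhds hy₀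
    obtain ⟨δ, hδ, hsub⟩ := Metric.mem_nhds_iff.1 hmem
    exact ⟨δ, hδ, fun y hy => hsub hy⟩
  -- obtain a sign-definite interval where k is positive
  have hinterval : (∃ c d : ℝ, 0 < c ∧ c < d ∧ ∀ y ∈ Set.Ioo c d, 0 < k y) ∨
      (∃ c d : ℝ, c < d ∧ d < 0 ∧ ∀ y ∈ Set.Ioo c d, 0 < k y) := by
    rcases lt_trichotomy y₀ 0 with hy | hy | hy
    · right
      refine ⟨y₀ - δ, y₀, by linarith, by linarith, fun y hyy => ?_⟩
      apply hball
      simp only [Metric.mem_ball, Real.dist_eq]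
      rw [abs_lt]
      constructor <;> [linarith [hyy.1]; linarith [hyy.2]]
    · left
      refine ⟨δ / 2, δ, by linarith, by linarith, fun y hyy => ?_⟩
      apply hball
      simp only [Metric.mem_ball, Real.dist_eq, hy]
      rw [abs_lt]
      constructor <;> [linarith [hyy.1]; linarith [hyy.2]]
    · left
      refine ⟨y₀, y₀ + δ, hy, by linarith, fun y hyy => ?_⟩
      apply hball
      simp only [Metric.mem_ball, Real.dist_eq]
      rw [abs_lt]
      constructor <;> [linarith [hyy.1]; linarith [hyy.2]]
  -- conclude
  intro x
  refine ⟨⟨hpos x, hlt1 x⟩, ?_⟩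
  rcases (hderiv_nonneg x).lt_or_eq with hdx | hdx
  · exact hdx
  exfalso
  have hxA : x ∈ A := hdx.symm
  rcases hinterval with ⟨c, d, hc, hcd, hkpos⟩ | ⟨c, d, hcd, hd0, hkpos⟩
  · -- interval of positive y: propagate to the left; use reflected set
    set B := {z : ℝ | -z ∈ A} with hBdef
    have hstepB : ∀ z ∈ B, ∀ y ∈ Set.Ioo c d, z + y ∈ B := by
      intro z hz y hy
      have hzy : -z - y ∈ A := hstep (-z) hz y (ne_of_gt (hkpos y hy))
      show -(z + y) ∈ A
      rw [show -(z + y) = -z - y by ring]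
      exact hzy
    have hxB : -x ∈ B := by simpa [hBdef] using hxA
    obtain ⟨X, hX⟩ := halfline_aux B c d hc hcd hstepB hxB
    have hzero' : ∀ z, z ≤ -X → deriv φ z = 0 := by
      intro z hz
      have : -z ∈ B := hX (-z) (by linarith)
      simpa [hBdef, hAdef] using this
    have hconst := const_on_halfline_bot hφ_diff hzero'
    have hlim : Tendsto (fun _ : ℝ => φ (-X)) atBot (𝓝 0) := by
      refine h.limit_bot.congr' ?_
      filter_upwards [eventually_le_atBot (-X)] with z hz
      exact hconst z hz
    have := tendsto_nhds_unique hlim tendsto_const_nhds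
    exact absurd this.symm (hpos (-X)).ne'
  · -- interval of negative y: propagate to the right
    have hstepA : ∀ z ∈ A, ∀ y ∈ Set.Ioo (-d) (-c), z + y ∈ A := by
      intro z hz y hy
      have hmem : -y ∈ Set.Ioo c d := ⟨by linarith [hy.2], by linarith [hy.1]⟩
      have := hstep z hz (-y) (ne_of_gt (hkpos _ hmem))
      simpa using this
    obtain ⟨X, hX⟩ := halfline_aux A (-d) (-c) (by linarith) (by linarith) hstepA hxA
    have hconst := const_on_halfline_top hφ_diff (fun z hz => hX z hz)
    have hlim : Tendsto (fun _ : ℝ => φ X) atTop (𝓝 1) := by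
      refine h.limit_top.congr' ?_
      filter_upwards [eventually_ge_atTop X] with z hz
      exact hconst z hz
    have := tendsto_nhds_unique hlim tendsto_const_nhds
    exact absurd this.symm (hlt1 X).ne
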